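/- Fix 0 < ρ ≤ 1. Define ā(n) = ([(n-1)²+(n-1)]ρ² + 2ρ(n-1) + 2)/(2ρ((n-1)ρ+1)) and d̄(n) = 1/(nρ+1-ρ). Then for each n ≥ 1, (ā(n+1) - ā(n))/(d̄(n) - d̄(n+1)) = n(n-1)ρ/2 + n. -/

import Mathlib

theorem stmt10 (ρ : ℝ) (hρ : 0 < ρ) (hρ1 : ρ ≤ 1)
    (a d : ℕ → ℝ)
    (ha : ∀ n : ℕ, a n =
      ((((n : ℝ) - 1) ^ 2 + ((n : ℝ) - 1)) * ρ ^ 2 + 2 * ρ * ((n : ℝ) - 1) + 2) /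
        (2 * ρ * (((n : ℝ) - 1) * ρ + 1)))
    (hd : ∀ n : ℕ, d n = 1 / ((n : ℝ) * ρ + 1 - ρ)) :
    ∀ n : ℕ, 1 ≤ n →
      (a (n + 1) - a n) / (d n - d (n + 1)) = (n : ℝ) * ((n : ℝ) - 1) * ρ / 2 + n := by
  intro n hn
  have hn1 : (1 : ℝ) ≤ n := by exact_mod_cast hn
  have h1 : (0 : ℝ) < ((n : ℝ) - 1) * ρ + 1 := by nlinarith
  have h2 : (0 : ℝ) < (n : ℝ) * ρ + 1 := by nlinarith
  rw [ha, ha, hd, hd]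
  push_cast
  have e1 : ((n : ℝ) + 1) * ρ + 1 - ρ = (n : ℝ) * ρ + 1 := by ring
  have e2 : (n : ℝ) * ρ + 1 - ρ = ((n : ℝ) - 1) * ρ + 1 := by ring
  rw [e1, e2]
  have hsub : 1 / (((n : ℝ) - 1) * ρ + 1) - 1 / ((n : ℝ) * ρ + 1)
      = ρ / ((((n : ℝ) - 1) * ρ + 1) * ((n : ℝ) * ρ + 1)) := by
    field_simp
    ring
  rw [hsub]
  have h1' : ((n : ℝ) - 1) * ρ + 1 ≠ 0 := ne_of_gt h1
  have h2' : (n : ℝ) * ρ + 1 ≠ 0 := ne_of_gt h2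
  have hρ' : ρ ≠ 0 := ne_of_gt hρ
  have h3' : ((n : ℝ) + 1 - 1) * ρ + 1 ≠ 0 := by rw [add_sub_cancel_right]; exact h2'
  have h4' : ρ * ((n : ℝ) - 1) + 1 ≠ 0 := by rw [mul_comm]; exact h1'
  field_simp
  ring
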